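/- Let p be a prime, let a_0, …, a_{p−1} be p-adic integers, and let x be a p-adic integer. Set s := (x + ⟨−x⟩_p)/p. Then ∑_{k=0}^{p−1} ((x)_k (1−x)_k / (k!)^2) · a_k ≡ A_{⟨−x⟩_p} + s·(A_{p−1−⟨−x⟩_p} − A_{⟨−x⟩_p}) (mod p^2), where A_j := ∑_{k=0}^j (−1)^k C(j,k) C(j+k,k) a_k. -/

import Mathlib

open Polynomial Finset

/-- The binomial-type transform `A_j = ∑_{k=0}^j (−1)^k C(j,k) C(j+k,k) a_k`
of a sequence of `p`-adic integers. -/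
noncomputable def Atrans (p : ℕ) [Fact p.Prime] (a : ℕ → ℤ_[p]) (j : ℕ) : ℤ_[p] :=
  ∑ k ∈ Finset.range (j + 1), (-1 : ℤ_[p]) ^ k * (j.choose k : ℤ_[p]) * ((j + k).choose k : ℤ_[p]) * a k

section aux

variable (p : ℕ) [Fact p.Prime]

lemma factUnit {k : ℕ} (hk : k < p) : IsUnit ((k.factorial : ℤ_[p])) := by
  rw [PadicInt.isUnit_iff]
  have h1 : ‖((k.factorial : ℤ) : ℤ_[p])‖ ≤ 1 := PadicInt.norm_le_one _
  rcases lt_or_eq_of_le h1 with h | h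
  · exfalso
    rw [PadicInt.norm_int_lt_one_iff_dvd] at h
    have := Int.natCast_dvd_natCast.mp h
    rw [(Fact.out : p.Prime).dvd_factorial] at this
    omega
  · exact_mod_cast h

noncomputable def wfun (k : ℕ) : ℤ_[p] := Ring.inverse ((k.factorial : ℤ_[p]) ^ 2)

lemma wfun_spec {k : ℕ} (hk : k < p) : wfun p k * (k.factorial : ℤ_[p]) ^ 2 = 1 :=
  Ring.inverse_mul_cancel _ ((factUnit p hk).pow 2)

noncomputable def Gpoly (a : ℕ → ℤ_[p]) : Polynomial ℤ_[p] :=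
  ∑ k ∈ range p, Polynomial.C (wfun p k * a k) * ((ascPochhammer ℤ_[p] k).comp X)
    * ((ascPochhammer ℤ_[p] k).comp (1 - X))

lemma Gpoly_eval (a : ℕ → ℤ_[p]) (t : ℤ_[p]) :
    (Gpoly p a).eval t = ∑ k ∈ range p,
      wfun p k * a k * ((ascPochhammer ℤ_[p] k).eval t) * ((ascPochhammer ℤ_[p] k).eval (1 - t)) := by
  unfold Gpoly
  rw [eval_finset_sum]
  refine Finset.sum_congr rfl fun k _ => ?_
  simp [eval_comp]

lemma termA (j k : ℕ) :
    (ascPochhammer ℤ_[p] k).eval (-(j : ℤ_[p])) * (ascPochhammer ℤ_[p] k).eval (1 + (j : ℤ_[p])) =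
      (-1 : ℤ_[p]) ^ k * (j.choose k : ℤ_[p]) * (((j + k).choose k : ℤ_[p])) * (k.factorial : ℤ_[p]) ^ 2 := by
  have h1 : (ascPochhammer ℤ_[p] k).eval (-(j : ℤ_[p])) = (-1) ^ k * (j.descFactorial k : ℤ_[p]) := by
    rw [ascPochhammer_eval_neg_eq_descPochhammer, descPochhammer_eval_eq_descFactorial]
  have h2 : (ascPochhammer ℤ_[p] k).eval (1 + (j : ℤ_[p])) = ((j + 1).ascFactorial k : ℤ_[p]) := by
    have h := ascPochhammer_eval_cast (S := ℤ_[p]) k (j + 1)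
    rw [ascPochhammer_nat_eq_ascFactorial] at h
    have h3 : (1 + (j : ℤ_[p])) = ((j + 1 : ℕ) : ℤ_[p]) := by push_cast; ring
    rw [h3, ← h]
  rw [h1, h2, Nat.descFactorial_eq_factorial_mul_choose, Nat.ascFactorial_eq_factorial_mul_choose]
  push_cast
  ring

lemma Gpoly_eval_neg (a : ℕ → ℤ_[p]) {j : ℕ} (hj : j < p) :
    (Gpoly p a).eval (-(j : ℤ_[p])) = Atrans p a j := by
  rw [Gpoly_eval]
  have hterm : ∀ k ∈ range p,
      wfun p k * a k * ((ascPochhammer ℤ_[p] k).eval (-(j : ℤ_[p])))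
        * ((ascPochhammer ℤ_[p] k).eval (1 - -(j : ℤ_[p])))
      = (-1 : ℤ_[p]) ^ k * (j.choose k : ℤ_[p]) * ((j + k).choose k : ℤ_[p]) * a k := by
    intro k hk
    have hA := termA p j k
    have hW := wfun_spec p (Finset.mem_range.mp hk)
    have he : (1 : ℤ_[p]) - -(j : ℤ_[p]) = 1 + (j : ℤ_[p]) := by ring
    rw [he]
    linear_combination (wfun p k * a k) * hA
      + ((-1 : ℤ_[p]) ^ k * (j.choose k : ℤ_[p]) * ((j + k).choose k : ℤ_[p]) * a k) * hW
  rw [Finset.sum_congr rfl hterm]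
  unfold Atrans
  symm
  apply Finset.sum_subset (Finset.range_subset_range.mpr hj)
  intro k hk hnk
  have : j < k := by
    simp only [Finset.mem_range] at hk hnk
    omega
  simp [Nat.choose_eq_zero_of_lt this]

lemma Gpoly_symm (a : ℕ → ℤ_[p]) (t : ℤ_[p]) :
    (Gpoly p a).eval (1 - t) = (Gpoly p a).eval t := by
  rw [Gpoly_eval, Gpoly_eval]
  refine Finset.sum_congr rfl fun k _ => ?_
  rw [sub_sub_cancel]
  ring

end aux

theorem stmt8 (p : ℕ) [Fact p.Prime] (a : ℕ → ℤ_[p]) (x : ℤ_[p])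
    (s : ℚ_[p]) (hs : s = ((x : ℚ_[p]) + (PadicInt.zmodRepr (-x) : ℚ_[p])) / p) :
    ‖(∑ k ∈ Finset.range p,
        (↑((ascPochhammer ℤ_[p] k).eval x) : ℚ_[p]) * (↑((ascPochhammer ℤ_[p] k).eval (1 - x)) : ℚ_[p])
          / (Nat.factorial k : ℚ_[p]) ^ 2 * (a k : ℚ_[p]))
      - ((Atrans p a (PadicInt.zmodRepr (-x)) : ℚ_[p])
          + s * ((Atrans p a (p - 1 - PadicInt.zmodRepr (-x)) : ℚ_[p])
              - (Atrans p a (PadicInt.zmodRepr (-x)) : ℚ_[p])))‖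
      ≤ (p : ℝ) ^ (-2 : ℤ) := by
  have hp : p.Prime := Fact.out
  have hp2 : 2 ≤ p := hp.two_le
  set r : ℕ := PadicInt.zmodRepr (-x) with hrdef
  have hr : r < p := PadicInt.zmodRepr_lt_p (-x)
  -- obtain c with x + r = p * c
  have hmem : (-x) - (r : ℤ_[p]) ∈ IsLocalRing.maximalIdeal ℤ_[p] := PadicInt.sub_zmodRepr_mem (-x)
  rw [PadicInt.maximalIdeal_eq_span_p, Ideal.mem_span_singleton] at hmem
  obtain ⟨d, hd⟩ := hmem
  set c : ℤ_[p] := -d with hcdef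
  have hc : x + (r : ℤ_[p]) = (p : ℤ_[p]) * c := by
    rw [hcdef]
    linear_combination -hd
  have hpQ : ((p : ℚ_[p])) ≠ 0 := by
    exact_mod_cast (Nat.cast_ne_zero (R := ℚ_[p])).mpr hp.pos.ne'
  have hsc : s = (c : ℚ_[p]) := by
    have hcQ : (x : ℚ_[p]) + (r : ℚ_[p]) = (p : ℚ_[p]) * (c : ℚ_[p]) := by
      exact_mod_cast congrArg (fun z : ℤ_[p] => (z : ℚ_[p])) hc
    rw [hs, hcQ, mul_div_cancel_left₀ _ hpQ]
  -- Taylor expansions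
  obtain ⟨k1, hk1⟩ := (Gpoly p a).binomExpansion (-(r : ℤ_[p])) ((p : ℤ_[p]) * c)
  obtain ⟨k2, hk2⟩ := (Gpoly p a).binomExpansion (-(r : ℤ_[p])) (p : ℤ_[p])
  have hx : x = -(r : ℤ_[p]) + (p : ℤ_[p]) * c := by linear_combination hc
  have key : (Gpoly p a).eval x - ((Gpoly p a).eval (-(r : ℤ_[p]))
      + c * ((Gpoly p a).eval (-(r : ℤ_[p]) + (p : ℤ_[p])) - (Gpoly p a).eval (-(r : ℤ_[p]))))
      = (p : ℤ_[p]) ^ 2 * (k1 * c ^ 2 - c * k2) := by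
    rw [hx]
    linear_combination hk1 - c * hk2
  -- values
  have hval1 : (Gpoly p a).eval (-(r : ℤ_[p])) = Atrans p a r := Gpoly_eval_neg p a hr
  have hval2 : (Gpoly p a).eval (-(r : ℤ_[p]) + (p : ℤ_[p])) = Atrans p a (p - 1 - r) := by
    rw [← Gpoly_symm]
    have hcast : (1 : ℤ_[p]) - (-(r : ℤ_[p]) + (p : ℤ_[p])) = -(((p - 1 - r : ℕ)) : ℤ_[p]) := by
      have h1 : ((p - 1 - r : ℕ) : ℤ_[p]) = (p : ℤ_[p]) - 1 - r := by
        push_cast [Nat.cast_sub (by omega : r ≤ p - 1), Nat.cast_sub (by omega : 1 ≤ p)]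
        ring
      rw [h1]; ring
    rw [hcast, Gpoly_eval_neg p a (by omega : p - 1 - r < p)]
  -- LHS sum
  have hL : (∑ k ∈ Finset.range p,
        (↑((ascPochhammer ℤ_[p] k).eval x) : ℚ_[p]) * (↑((ascPochhammer ℤ_[p] k).eval (1 - x)) : ℚ_[p])
          / (Nat.factorial k : ℚ_[p]) ^ 2 * (a k : ℚ_[p]))
      = (((Gpoly p a).eval x : ℤ_[p]) : ℚ_[p]) := by
    rw [Gpoly_eval]
    rw [show ((∑ k ∈ Finset.range p, wfun p k * a k * ((ascPochhammer ℤ_[p] k).eval x)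
          * ((ascPochhammer ℤ_[p] k).eval (1 - x)) : ℤ_[p]) : ℚ_[p])
        = ∑ k ∈ Finset.range p, ((wfun p k * a k * ((ascPochhammer ℤ_[p] k).eval x)
          * ((ascPochhammer ℤ_[p] k).eval (1 - x)) : ℤ_[p]) : ℚ_[p])
      from map_sum (PadicInt.Coe.ringHom (p := p)) _ _]
    refine Finset.sum_congr rfl fun k hk => ?_
    push_cast
    have hW := wfun_spec p (Finset.mem_range.mp hk)
    have hWQ : ((wfun p k : ℚ_[p])) * ((k.factorial : ℚ_[p])) ^ 2 = 1 := by
      exact_mod_cast congrArg (fun z : ℤ_[p] => (z : ℚ_[p])) hW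
    have hfne : ((k.factorial : ℚ_[p])) ≠ 0 := by
      exact_mod_cast (Nat.cast_ne_zero (R := ℚ_[p])).mpr k.factorial_ne_zero
    field_simp
    linear_combination (-((((ascPochhammer ℤ_[p] k).eval x : ℤ_[p]) : ℚ_[p])
      * (((ascPochhammer ℤ_[p] k).eval (1 - x) : ℤ_[p]) : ℚ_[p]) * (a k : ℚ_[p]))) * hWQ
  rw [hL, ← hval1, ← hval2, hsc]
  have hEq : (((Gpoly p a).eval x : ℤ_[p]) : ℚ_[p])
      - ((((Gpoly p a).eval (-(r : ℤ_[p])) : ℤ_[p]) : ℚ_[p])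
        + (c : ℚ_[p]) * ((((Gpoly p a).eval (-(r : ℤ_[p]) + (p : ℤ_[p])) : ℤ_[p]) : ℚ_[p])
            - (((Gpoly p a).eval (-(r : ℤ_[p])) : ℤ_[p]) : ℚ_[p])))
      = (((p : ℤ_[p]) ^ 2 * (k1 * c ^ 2 - c * k2) : ℤ_[p]) : ℚ_[p]) := by
    push_cast [← key]
    ring
  rw [hEq, PadicInt.padic_norm_e_of_padicInt, norm_mul, PadicInt.norm_p_pow]
  calc (p : ℝ) ^ (-(2:ℕ) : ℤ) * ‖k1 * c ^ 2 - c * k2‖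
      ≤ (p : ℝ) ^ (-(2:ℕ) : ℤ) * 1 := by
        apply mul_le_mul_of_nonneg_left (PadicInt.norm_le_one _)
        positivity
    _ = (p : ℝ) ^ (-2 : ℤ) := by norm_num
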